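/- Let O be a commutative ring, G a group, H a subgroup of finite index with abelian quotient Δ = G/H, and T an O[G]-module that is free of rank 1 over O, on which H acts through a character. For a character η of Δ (valued in O^×, viewed as a character of G by inflation), the map f from the η-eigenspace of the induced module O[G] ⊗_{O[H]} T to T ⊗ η given by σ ⊗ t ↦ η(σ)·t is an isomorphism of O[G]-modules (where G acts on T ⊗ η by the H-action twisted by η). -/

import Mathlib

/-- Let `O` be a commutative ring, `G` a group, `H ⊆ G` a subgroup of finite index with abelian
quotient `Δ = G/H` (here realized as a surjection `π : G ↠ Δ` onto a finite abelian group),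
and let `T` be an `O[G]`-module, free of rank one over `O`, on which `H` acts through a
character; the action of `G` on the induced module `O[G] ⊗_{O[H]} T ≅ O[Δ]` is given (in the
natural basis) by `g • (single δ a) = single (π(g)·δ) (χ(g)·a)`.  For a character `η` of `Δ`,
the map `f : (O[G] ⊗_{O[H]} T)^η → T ⊗ η`, `σ ⊗ t ↦ η(σ)·t` — i.e. the `O`-linear map `F` with
`F(single δ a) = η(δ)·a` restricted to the `η`-eigenspace `E` for the `Δ`-action — is an
isomorphism of `O[G]`-modules, where `G` acts on `T ⊗ η ≅ O` via `χ·(η ∘ π)`:  `F` is bijective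
on `E` and intertwines the `G`-actions. -/
theorem stmt_0 {O : Type*} [CommRing O] {G : Type*} [Group G] {Δ : Type*} [CommGroup Δ]
    [Fintype Δ]
    (π : G →* Δ) (hπ : Function.Surjective π) (χ : G →* Oˣ) (η : Δ →* Oˣ)
    (hcard : IsUnit (Fintype.card Δ : O))
    (E : Submodule O (Δ →₀ O))
    (hE : ∀ m : Δ →₀ O, m ∈ E ↔
      ∀ δ : Δ, Finsupp.mapDomain (fun x : Δ => δ * x) m = (η δ : O) • m)
    (F : (Δ →₀ O) →ₗ[O] O)
    (hF : ∀ (δ : Δ) (a : O), F (Finsupp.single δ a) = (η δ : O) * a) :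
    Function.Bijective (fun m : E => F m.1) ∧
      ∀ (g : G) (m : Δ →₀ O),
        F ((χ g : O) • Finsupp.mapDomain (fun x : Δ => π g * x) m) =
          ((χ g : O) * (η (π g) : O)) * F m := by
  classical
  -- equivariance of F under translation of the domain
  have hmap : ∀ (δ : Δ) (m : Δ →₀ O),
      F (Finsupp.mapDomain (fun x : Δ => δ * x) m) = (η δ : O) * F m := by
    intro δ m
    induction m using Finsupp.induction_linear with
    | zero => simp
    | add f g hf hg => rw [Finsupp.mapDomain_add, map_add, hf, hg, map_add]; ring
    | single a b => rw [Finsupp.mapDomain_single, hF, hF, map_mul]; push_cast; ring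
  -- the canonical eigenvector
  set e : Δ →₀ O := ∑ δ : Δ, Finsupp.single δ ((((η δ)⁻¹ : Oˣ) : O)) with he
  have he_apply : ∀ δ : Δ, e δ = (((η δ)⁻¹ : Oˣ) : O) := by
    intro δ
    rw [he]
    rw [Finset.sum_apply']
    simp [Finsupp.single_apply]
  have hFe : F e = (Fintype.card Δ : O) := by
    rw [he, map_sum]
    simp [hF, Finset.card_univ]
  -- pointwise description of membership in E
  have hmem_of : ∀ m : Δ →₀ O, (∀ δ, m δ = (((η δ)⁻¹ : Oˣ) : O) * m 1) → m ∈ E := by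
    intro m hm
    rw [hE]
    intro δ0
    ext δ
    have hδ : δ = δ0 * (δ0⁻¹ * δ) := by group
    rw [hδ, Finsupp.mapDomain_apply (mul_right_injective δ0), Finsupp.smul_apply, smul_eq_mul]
    have h2 : δ0 * (δ0⁻¹ * δ) = δ := by group
    rw [h2, hm (δ0⁻¹ * δ), hm δ]
    have hu : ((η (δ0⁻¹ * δ))⁻¹ : Oˣ) = η δ0 * (η δ)⁻¹ := by
      rw [map_mul, map_inv, mul_inv_rev, inv_inv, mul_comm]
    rw [hu, Units.val_mul, mul_assoc]
  have hof_mem : ∀ m : Δ →₀ O, m ∈ E → ∀ δ, m δ = (((η δ)⁻¹ : Oˣ) : O) * m 1 := by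
    intro m hm δ
    have h := (hE m).mp hm δ
    have h1 : Finsupp.mapDomain (fun x : Δ => δ * x) m (δ * 1) = m 1 :=
      Finsupp.mapDomain_apply (mul_right_injective δ) m 1
    rw [h, mul_one, Finsupp.smul_apply, smul_eq_mul] at h1
    calc m δ = (((η δ)⁻¹ : Oˣ) : O) * ((η δ : O) * m δ) := by
          rw [← mul_assoc, Units.inv_mul, one_mul]
      _ = (((η δ)⁻¹ : Oˣ) : O) * m 1 := by rw [h1]
  have heE : e ∈ E := by
    apply hmem_of
    intro δ
    rw [he_apply δ, he_apply 1]
    simp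
  -- every element of E is a multiple of e
  have hscal : ∀ m : Δ →₀ O, m ∈ E → m = m 1 • e := by
    intro m hm
    ext δ
    rw [Finsupp.smul_apply, he_apply δ, smul_eq_mul, hof_mem m hm δ]
    ring
  have hFm : ∀ m : Δ →₀ O, m ∈ E → F m = m 1 * (Fintype.card Δ : O) := by
    intro m hm
    conv_lhs => rw [hscal m hm]
    rw [map_smul, hFe, smul_eq_mul]
  have hcv : (↑hcard.unit : O) = (Fintype.card Δ : O) := hcard.unit_spec
  have key : ((hcard.unit⁻¹ : Oˣ) : O) * (Fintype.card Δ : O) = 1 := by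
    have h := Units.inv_mul hcard.unit
    rwa [hcv] at h
  have key2 : (Fintype.card Δ : O) * ((hcard.unit⁻¹ : Oˣ) : O) = 1 := by
    rw [mul_comm]; exact key
  constructor
  · constructor
    · rintro ⟨m, hm⟩ ⟨m', hm'⟩ hFF
      simp only [hFm m hm, hFm m' hm'] at hFF
      have h1 : m 1 = m' 1 := by
        have h2 := congrArg (· * ((hcard.unit⁻¹ : Oˣ) : O)) hFF
        simpa only [mul_assoc, key2, mul_one] using h2
      have h3 : m = m' := by rw [hscal m hm, hscal m' hm', h1]
      exact Subtype.ext h3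
    · intro c
      refine ⟨⟨(((hcard.unit⁻¹ : Oˣ) : O) * c) • e, E.smul_mem _ heE⟩, ?_⟩
      show F _ = c
      rw [map_smul, hFe, smul_eq_mul, mul_right_comm, key, one_mul]
  · intro g m
    rw [map_smul, hmap, smul_eq_mul, mul_assoc]
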